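/- Strict decrease of maximal costs when the hierarchy strictly shrinks: in a quantitative reachability game, if P^I_α(v) ≠ P^I_{α+1}(v) for some I and v, then there exist a subset J ⊆ Π and an edge (u,u') ∈ E such that the maximal cost vector satisfies Λ̄(P^J_{α+1}(u), u') ≠ Λ̄(P^J_α(u), u'); conversely, if P^I_α(v) = P^I_{α+1}(v) then Λ̄(P^I_α(v), v') = Λ̄(P^I_{α+1}(v), v') for all edges (v,v'). -/

import Mathlib

open Classical

noncomputable section

/-- A multiplayer turn-based quantitative game on a directed graph:
`owner` assigns each vertex to a player, `E` is the edge relation (every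
vertex has a successor), and `cost i` is player `i`'s cost function on
infinite sequences of vertices (to be minimized), valued in `ℝ ∪ {±∞}`. -/
structure QGame (P V : Type) where
  owner : V → P
  E : V → V → Prop
  succ_exists : ∀ v, ∃ v', E v v'
  cost : P → (ℕ → V) → EReal

namespace QGame

variable {P V : Type}

/-- An infinite play of the game: consecutive vertices are joined by edges. -/
def IsPlay (G : QGame P V) (ρ : ℕ → V) : Prop := ∀ n, G.E (ρ n) (ρ (n + 1))

/-- Concatenation `hρ` of a finite history `h` with an infinite play `ρ`. -/
def prepend (h : List V) (ρ : ℕ → V) : ℕ → V := fun n =>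
  if hn : n < h.length then h.get ⟨n, hn⟩ else ρ (n - h.length)

/-- The prefix of length `n` of a play, as a list. -/
def playPrefix (ρ : ℕ → V) (n : ℕ) : List V := List.ofFn fun k : Fin n => ρ k

/-- `hv` is a history of the game initialized at `v0`: here `h` is the strict
past and `v` the current vertex; the sequence `h ++ [v]` starts at `v0` and
follows edges. -/
def IsHist (G : QGame P V) (v0 : V) (h : List V) (v : V) : Prop :=
  (h ++ [v]).head? = some v0 ∧ List.Chain' G.E (h ++ [v])

/-- A (turn-based) strategy profile: given the past history and the current
vertex, choose the next vertex.  An individual strategy of player `i` is of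
the same type; only its values at vertices owned by `i` matter. -/
abbrev Strat (P V : Type) := List V → V → V

/-- A profile/strategy is valid if it always follows edges. -/
def Valid (G : QGame P V) (σ : Strat P V) : Prop := ∀ h v, G.E v (σ h v)

/-- History/current-vertex pair produced after `n` steps of `σ` from `v`. -/
def outcomeAux (σ : Strat P V) (v : V) : ℕ → List V × V
  | 0 => ([], v)
  | n + 1 =>
      let p := outcomeAux σ v n
      (p.1 ++ [p.2], σ p.1 p.2)

/-- The outcome play of profile `σ` from initial vertex `v`. -/
def outcome (σ : Strat P V) (v : V) (n : ℕ) : V := (outcomeAux σ v n).2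

/-- The profile where player `i` unilaterally deviates to strategy `τ`
from the profile `σ`. -/
def devProf (G : QGame P V) (σ τ : Strat P V) (i : P) : Strat P V :=
  fun h v => if G.owner v = i then τ h v else σ h v

/-- The set of deviation steps of `τ` from `σ` (for player `i`, from `v`):
positions `n` along the outcome of the deviated profile where the current
vertex belongs to player `i` and `τ` disagrees with `σ`. -/
def devSteps (G : QGame P V) (σ τ : Strat P V) (i : P) (v : V) : Set ℕ :=
  {n | G.owner (outcome (G.devProf σ τ i) v n) = i ∧
       σ (outcomeAux (G.devProf σ τ i) v n).1 (outcome (G.devProf σ τ i) v n) ≠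
       τ (outcomeAux (G.devProf σ τ i) v n).1 (outcome (G.devProf σ τ i) v n)}

/-- `τ` is finitely deviating from `σ`. -/
def FinDev (G : QGame P V) (σ τ : Strat P V) (i : P) (v : V) : Prop :=
  (G.devSteps σ τ i v).Finite

/-- `τ` is one-shot deviating from `σ`: its unique deviation step is at the
initial vertex. -/
def OneShotDev (G : QGame P V) (σ τ : Strat P V) (i : P) (v : V) : Prop :=
  G.devSteps σ τ i v = {0}

/-- Nash equilibrium of the profile `σ` from `v`, with respect to a cost
assignment `c` (no player has a profitable unilateral deviation). -/
def IsNEwith (G : QGame P V) (c : P → (ℕ → V) → EReal) (σ : Strat P V) (v : V) : Prop :=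
  ∀ i τ, G.Valid τ →
    c i (outcome σ v) ≤ c i (outcome (G.devProf σ τ i) v)

/-- Weak Nash equilibrium: no profitable finitely deviating strategy. -/
def IsWeakNEwith (G : QGame P V) (c : P → (ℕ → V) → EReal) (σ : Strat P V) (v : V) : Prop :=
  ∀ i τ, G.Valid τ → G.FinDev σ τ i v →
    c i (outcome σ v) ≤ c i (outcome (G.devProf σ τ i) v)

/-- Very weak Nash equilibrium: no profitable one-shot deviating strategy. -/
def IsVeryWeakNEwith (G : QGame P V) (c : P → (ℕ → V) → EReal) (σ : Strat P V) (v : V) : Prop :=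
  ∀ i τ, G.Valid τ → G.OneShotDev σ τ i v →
    c i (outcome σ v) ≤ c i (outcome (G.devProf σ τ i) v)

/-- The strategy profile induced by `σ` in the subgame after history `h`. -/
def subStrat (σ : Strat P V) (h : List V) : Strat P V := fun g v => σ (h ++ g) v

/-- The cost functions of the subgame after history `h`. -/
def subCost (G : QGame P V) (h : List V) : P → (ℕ → V) → EReal :=
  fun i ρ => G.cost i (prepend h ρ)

/-- Subgame perfect equilibrium: Nash equilibrium in every subgame. -/
def IsSPE (G : QGame P V) (v0 : V) (σ : Strat P V) : Prop :=
  ∀ h v, G.IsHist v0 h v → G.IsNEwith (G.subCost h) (subStrat σ h) v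

/-- Weak subgame perfect equilibrium: weak NE in every subgame. -/
def IsWeakSPE (G : QGame P V) (v0 : V) (σ : Strat P V) : Prop :=
  ∀ h v, G.IsHist v0 h v → G.IsWeakNEwith (G.subCost h) (subStrat σ h) v

/-- Very weak subgame perfect equilibrium: very weak NE in every subgame. -/
def IsVeryWeakSPE (G : QGame P V) (v0 : V) (σ : Strat P V) : Prop :=
  ∀ h v, G.IsHist v0 h v → G.IsVeryWeakNEwith (G.subCost h) (subStrat σ h) v

/-- One elimination step: `ρ` (a potential outcome in the subgame after `h`)
is erased if some player `i` controlling a vertex `ρ n` along `hρ` has an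
alternative edge to some `v' ≠ ρ (n+1)` such that every play `ρ'` in the
current potential set after the extended history gives `i` a strictly
smaller cost than `hρ`. -/
def Eset (G : QGame P V) (Pr : List V → V → Set (ℕ → V)) (h : List V) :
    Set (ℕ → V) :=
  {ρ | ∃ n v', G.E (ρ n) v' ∧ v' ≠ ρ (n + 1) ∧
      ∀ ρ' ∈ Pr (h ++ playPrefix ρ (n + 1)) v',
        G.cost (G.owner (ρ n)) (prepend (h ++ playPrefix ρ (n + 1)) ρ') <
          G.cost (G.owner (ρ n)) (prepend h ρ)}

/-- The transfinite sequence `P_α(hv)` of sets of potential outcomes of weak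
Nash equilibria in the subgame `(G|_h, v)`: all plays at stage `0`, removal
of `E_α` at successors, intersections at limits. -/
def Pset (G : QGame P V) (α : Ordinal) : List V → V → Set (ℕ → V) :=
  Ordinal.limitRecOn (motive := fun _ => List V → V → Set (ℕ → V)) α
    (fun _h v => {ρ | G.IsPlay ρ ∧ ρ 0 = v})
    (fun _ Pr => fun h v => Pr h v \ G.Eset Pr h)
    (fun α _ Pr => fun h v => ⋂ (β : Ordinal) (hβ : β < α), Pr β hβ h v)

/-- A sequence of plays converges to `ρ` (in the product topology on `V^ω`
with `V` discrete) iff every finite prefix of `ρ` is eventually a prefix of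
the members of the sequence. -/
def Converges (ρs : ℕ → ℕ → V) (ρ : ℕ → V) : Prop :=
  ∀ m, ∃ N, ∀ n ≥ N, ∀ k ≤ m, ρs n k = ρ k

/-- Upper semicontinuity of a cost function on plays. -/
def USCcost (G : QGame P V) (c : (ℕ → V) → EReal) : Prop :=
  ∀ (ρs : ℕ → ℕ → V) (ρ : ℕ → V), (∀ n, G.IsPlay (ρs n)) → G.IsPlay ρ →
    Converges ρs ρ →
      Filter.limsup (fun n => c (ρs n)) Filter.atTop ≤ c ρ

/-- A strategy (profile) is finite-memory if it is computed by a Moore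
machine: a finite set `M` of memory states, updated while reading the
history, determines the move. -/
def FinMem (σ : Strat P V) : Prop :=
  ∃ (M : Type) (_ : Finite M) (m0 : M) (upd : M → V → M) (act : M → V → V),
    ∀ h v, σ h v = act (h.foldl upd m0) v

/-- Quantitative reachability cost: the least index at which `ρ` visits the
target set `T`, and `+∞` if `T` is never visited. -/
def reachCost (T : Set V) (ρ : ℕ → V) : EReal :=
  if h : ∃ n, ρ n ∈ T then ((Nat.find h : ℕ) : EReal) else ⊤

/-- `G` is a quantitative reachability game with target sets `T i`. -/
def IsReachGame (G : QGame P V) (T : P → Set V) : Prop :=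
  ∀ i ρ, G.cost i ρ = reachCost (T i) ρ

/-- The set of players that have not visited their target set along the
history `h`. -/
def Iset (T : P → Set V) (h : List V) : Set P := {i | ∀ u ∈ h, u ∉ T i}

end QGame

namespace QGame

/-- The vector `Λ̄(P^I_α(v), v')` of maximal costs of the plays of `P_α(hv)`
starting with the edge `(v, v')`, with the convention that the component of
a player `i` who has already reached his target along `h` is `-1` (sup over
the empty set is `⊥`). -/
noncomputable def LamVec {P V : Type} (G : QGame P V) (T : P → Set V)
    (α : Ordinal) (h : List V) (v v' : V) : P → EReal :=
  fun i =>
    if i ∈ Iset T h then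
      sSup ((G.cost i) '' {ρ | ρ ∈ G.Pset α h v ∧ ρ 1 = v'})
    else -1

end QGame

namespace QGame

variable {P V : Type} (G : QGame P V)

/-- The shift of a play by `n` steps. -/
def shift (ρ : ℕ → V) (n : ℕ) : ℕ → V := fun k => ρ (n + k)

@[simp] lemma shift_apply (ρ : ℕ → V) (n k : ℕ) : shift ρ n k = ρ (n + k) := rfl

@[simp] lemma playPrefix_length (ρ : ℕ → V) (n : ℕ) : (playPrefix ρ n).length = n := by
  simp [playPrefix]

lemma playPrefix_getElem (ρ : ℕ → V) (n k : ℕ) (hk : k < n) :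
    (playPrefix ρ n)[k]'(by simpa using hk) = ρ k := by
  simp [playPrefix]

lemma playPrefix_succ (ρ : ℕ → V) (n : ℕ) :
    playPrefix ρ (n + 1) = playPrefix ρ n ++ [ρ n] := by
  rw [playPrefix, List.ofFn_succ']
  simp [playPrefix, List.concat_eq_append, Fin.last]

lemma playPrefix_add (ρ : ℕ → V) (n m : ℕ) :
    playPrefix ρ n ++ playPrefix (shift ρ n) m = playPrefix ρ (n + m) := by
  induction m with
  | zero => simp [playPrefix]
  | succ m ih =>
      rw [playPrefix_succ, ← List.append_assoc, ih, shift_apply, ← playPrefix_succ]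
      congr 1

lemma prepend_lt (h : List V) (ρ : ℕ → V) (k : ℕ) (hk : k < h.length) :
    prepend h ρ k = h[k] := dif_pos hk

lemma prepend_ge (h : List V) (ρ : ℕ → V) (k : ℕ) (hk : ¬ k < h.length) :
    prepend h ρ k = ρ (k - h.length) := dif_neg hk

lemma prepend_append_shift (h : List V) (ρ : ℕ → V) (n : ℕ) :
    prepend (h ++ playPrefix ρ n) (shift ρ n) = prepend h ρ := by
  funext k
  by_cases hk : k < h.length
  · rw [prepend_lt _ _ _ hk, prepend_lt _ _ _ (by simp; omega),
      List.getElem_append_left hk]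
  · by_cases hk2 : k < h.length + n
    · rw [prepend_lt _ _ _ (by simp; omega), prepend_ge _ _ _ hk,
        List.getElem_append_right (by omega)]
      rw [playPrefix_getElem _ _ _ (by omega)]
    · rw [prepend_ge _ _ _ (by simp; omega), prepend_ge _ _ _ hk]
      simp only [List.length_append, playPrefix_length, shift_apply]
      congr 1
      omega

lemma reachCost_nonneg (W : Set V) (f : ℕ → V) : (0 : EReal) ≤ reachCost W f := by
  unfold reachCost
  split
  · have := EReal.natCast_le_iff.mpr (Nat.zero_le (Nat.find (by assumption)))
    simpa using this
  · exact le_top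

lemma reachCost_ne_bot (W : Set V) (f : ℕ → V) : reachCost W f ≠ ⊥ := by
  intro e
  have := reachCost_nonneg W f
  rw [e] at this
  exact absurd this (by simp)

lemma reachCost_cases (W : Set V) (f : ℕ → V) :
    reachCost W f = ⊤ ∨ ∃ m : ℕ, reachCost W f = (m : EReal) := by
  unfold reachCost
  split
  · exact Or.inr ⟨_, rfl⟩
  · exact Or.inl rfl

lemma reachCost_eq_top (W : Set V) (f : ℕ → V) (hf : ∀ k, f k ∉ W) :
    reachCost W f = ⊤ := by
  unfold reachCost
  rw [dif_neg]
  rintro ⟨k, hk⟩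
  exact hf k hk

lemma exists_hit_of_ne_top (W : Set V) (f : ℕ → V) (hf : reachCost W f ≠ ⊤) :
    ∃ k, f k ∈ W := by
  by_contra hc
  push_neg at hc
  exact hf (reachCost_eq_top W f hc)

lemma reachCost_le_of_mem (W : Set V) (f : ℕ → V) {k : ℕ} (hk : f k ∈ W) :
    reachCost W f ≤ (k : EReal) := by
  unfold reachCost
  rw [dif_pos ⟨k, hk⟩]
  exact EReal.natCast_le_iff.mpr (Nat.find_min' _ hk)

lemma lt_reachCost_of_not_mem (W : Set V) (f : ℕ → V) (m : ℕ)
    (hm : ∀ k ≤ m, f k ∉ W) : (m : EReal) < reachCost W f := by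
  unfold reachCost
  split
  · rename_i hex
    refine EReal.natCast_lt_iff.mpr ?_
    rw [Nat.lt_find_iff]
    exact fun k hk => hm k hk
  · exact lt_of_le_of_ne le_top (EReal.natCast_ne_top m)

lemma reachCost_prepend (W : Set V) (L : List V) (f : ℕ → V)
    (hL : ∀ u ∈ L, u ∉ W) :
    reachCost W (prepend L f) = (L.length : EReal) + reachCost W f := by
  have hpre : ∀ k < L.length, prepend L f k ∉ W := by
    intro k hk
    rw [prepend_lt _ _ _ hk]
    exact hL _ (List.getElem_mem hk)
  by_cases hf : ∃ n, f n ∈ W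
  · obtain ⟨n, hn⟩ := hf
    have hex : ∃ n, f n ∈ W := ⟨n, hn⟩
    have hex2 : ∃ k, prepend L f k ∈ W := by
      refine ⟨L.length + Nat.find hex, ?_⟩
      rw [prepend_ge _ _ _ (by omega)]
      simpa using Nat.find_spec hex
    have hfind : Nat.find hex2 = L.length + Nat.find hex := by
      rw [Nat.find_eq_iff]
      constructor
      · rw [prepend_ge _ _ _ (by omega)]
        simpa using Nat.find_spec hex
      · intro j hj hcon
        by_cases hjL : j < L.length
        · exact hpre j hjL hcon
        · rw [prepend_ge _ _ _ hjL] at hcon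
          exact Nat.find_min hex (by omega) hcon
    unfold reachCost
    rw [dif_pos hex2, dif_pos hex, hfind, Nat.cast_add]
  · push_neg at hf
    rw [reachCost_eq_top W f hf, reachCost_eq_top, EReal.add_top_of_ne_bot (EReal.natCast_ne_bot _)]
    intro k
    by_cases hk : k < L.length
    · exact hpre k hk
    · rw [prepend_ge _ _ _ hk]; exact hf _


lemma reachCost_congr_prefix (W : Set V) (f f' : ℕ → V) (L : ℕ)
    (hag : ∀ k < L, f k = f' k) (hhit : ∃ k, k < L ∧ f k ∈ W) :
    reachCost W f = reachCost W f' := by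
  obtain ⟨k, hkL, hk⟩ := hhit
  have hex : ∃ n, f n ∈ W := ⟨k, hk⟩
  have hex' : ∃ n, f' n ∈ W := ⟨k, by rw [← hag k hkL]; exact hk⟩
  have h1 : Nat.find hex ≤ k := Nat.find_min' _ hk
  have h2 : Nat.find hex' ≤ Nat.find hex := by
    refine Nat.find_min' _ ?_
    rw [← hag _ (lt_of_le_of_lt h1 hkL)]
    exact Nat.find_spec hex
  have h3 : Nat.find hex ≤ Nat.find hex' := by
    refine Nat.find_min' _ ?_
    rw [hag _ (lt_of_le_of_lt (h2.trans h1) hkL)]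
    exact Nat.find_spec hex'
  unfold reachCost
  rw [dif_pos hex, dif_pos hex']
  rw [le_antisymm h3 h2]

lemma Pset_zero (h : List V) (v : V) :
    G.Pset 0 h v = {ρ | G.IsPlay ρ ∧ ρ 0 = v} := by
  unfold Pset
  rw [Ordinal.limitRecOn_zero]

lemma Pset_succ (α : Ordinal) (h : List V) (v : V) :
    G.Pset (α + 1) h v = G.Pset α h v \ G.Eset (G.Pset α) h := by
  unfold Pset
  rw [Ordinal.add_one_eq_succ, Ordinal.limitRecOn_succ]

lemma Pset_limit (α : Ordinal) (hα : Order.IsSuccLimit α) (h : List V) (v : V) :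
    G.Pset α h v = ⋂ (β : Ordinal) (_ : β < α), G.Pset β h v := by
  unfold Pset
  rw [Ordinal.limitRecOn_limit _ _ _ _ hα]

lemma Pset_antitone : ∀ α β : Ordinal, β ≤ α → ∀ (h : List V) (v : V),
    G.Pset α h v ⊆ G.Pset β h v := by
  intro α
  induction α using Ordinal.induction with
  | h α IH =>
    intro β hβ h v
    rcases eq_or_lt_of_le hβ with rfl | hlt
    · exact subset_rfl
    rcases Ordinal.zero_or_succ_or_isSuccLimit α with rfl | ⟨γ, rfl⟩ | hlim
    · exact absurd hlt (not_lt_zero (a := β))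
    · rw [← Ordinal.add_one_eq_succ, Pset_succ]
      intro ρ hρ
      exact IH γ (Order.lt_succ γ) β (Order.lt_succ_iff.mp hlt) h v hρ.1
    · rw [Pset_limit G α hlim]
      exact Set.iInter₂_subset β hlt

lemma isPlay_of_mem_Pset {α : Ordinal} {h : List V} {v : V} {ρ : ℕ → V}
    (hρ : ρ ∈ G.Pset α h v) : G.IsPlay ρ ∧ ρ 0 = v := by
  have := G.Pset_antitone α 0 (zero_le (a := α)) h v hρ
  rwa [Pset_zero] at this

lemma Pset_shift : ∀ (α : Ordinal) (h : List V) (v : V) (ρ : ℕ → V) (n : ℕ),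
    ρ ∈ G.Pset α h v → shift ρ n ∈ G.Pset α (h ++ playPrefix ρ n) (ρ n) := by
  intro α
  induction α using Ordinal.induction with
  | h α IH =>
    intro h v ρ n hρ
    rcases Ordinal.zero_or_succ_or_isSuccLimit α with rfl | ⟨γ, rfl⟩ | hlim
    · rw [Pset_zero] at hρ ⊢
      exact ⟨fun k => by simpa [Nat.add_assoc] using hρ.1 (n + k), rfl⟩
    · rw [← Ordinal.add_one_eq_succ, Pset_succ] at hρ ⊢
      refine ⟨IH γ (Order.lt_succ γ) h v ρ n hρ.1, ?_⟩
      rintro ⟨m, v', hE, hne, hc⟩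
      have hlist : (h ++ playPrefix ρ n) ++ playPrefix (shift ρ n) (m + 1)
          = h ++ playPrefix ρ (n + m + 1) := by
        rw [List.append_assoc, playPrefix_add, Nat.add_assoc]
      refine hρ.2 ⟨n + m, v', hE, by simpa [Nat.add_assoc] using hne, ?_⟩
      intro ρ' hρ'
      have hρ'' : ρ' ∈ G.Pset γ ((h ++ playPrefix ρ n) ++ playPrefix (shift ρ n) (m + 1)) v' := by
        rw [hlist]; exact hρ'
      have hcost := hc ρ' hρ''
      rw [hlist, prepend_append_shift] at hcost
      simpa [Nat.add_assoc] using hcost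
    · rw [Pset_limit G α hlim] at hρ ⊢
      simp only [Set.mem_iInter] at hρ ⊢
      exact fun β hβ => IH β hβ h v ρ n (hρ β hβ)

/-- A play obtained by arbitrary choices of successors. -/
noncomputable def somePlay (G : QGame P V) (v : V) : ℕ → V
  | 0 => v
  | n + 1 => Classical.choose (G.succ_exists (G.somePlay v n))

lemma somePlay_isPlay (v : V) : G.IsPlay (G.somePlay v) := fun n =>
  Classical.choose_spec (G.succ_exists (G.somePlay v n))

lemma somePlay_zero (v : V) : G.somePlay v 0 = v := rfl

lemma Iset_append_subset (T : P → Set V) (h h' : List V) :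
    Iset T (h ++ h') ⊆ Iset T h := fun i hi u hu =>
  hi u (List.mem_append_left h' hu)

lemma not_mem_Iset_iff {T : P → Set V} {h : List V} {i : P} :
    i ∉ Iset T h ↔ ∃ u ∈ h, u ∈ T i := by
  simp [Iset]

/-- If a player has reached his target along the history, any two
continuations give him the same (prepended) cost. -/
lemma reachCost_prepend_congr_of_served {T : P → Set V} {i : P} {h : List V}
    (hi : i ∉ Iset T h) (f f' : ℕ → V) :
    reachCost (T i) (prepend h f) = reachCost (T i) (prepend h f') := by
  obtain ⟨u, hu, huT⟩ := not_mem_Iset_iff.mp hi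
  obtain ⟨k, hk, rfl⟩ := List.getElem_of_mem hu
  refine reachCost_congr_prefix _ _ _ h.length
    (fun j hj => by rw [prepend_lt _ _ _ hj, prepend_lt _ _ _ hj]) ⟨k, hk, ?_⟩
  rw [prepend_lt _ _ _ hk]
  exact huT

/-- If every player has been served along `h`, nothing is ever eliminated. -/
lemma Pset_allServed (T : P → Set V) (hT : G.IsReachGame T) :
    ∀ (α : Ordinal) (h : List V), Iset T h = ∅ → ∀ v : V,
      G.Pset α h v = {ρ | G.IsPlay ρ ∧ ρ 0 = v} := by
  intro α
  induction α using Ordinal.induction with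
  | h α IH =>
    intro h hserved v
    rcases Ordinal.zero_or_succ_or_isSuccLimit α with rfl | ⟨γ, rfl⟩ | hlim
    · exact Pset_zero G h v
    · rw [← Ordinal.add_one_eq_succ, Pset_succ, IH γ (Order.lt_succ γ) h hserved v]
      refine Set.eq_of_subset_of_subset Set.diff_subset ?_
      intro π hπ
      refine ⟨hπ, ?_⟩
      rintro ⟨m, v', hE, hne, hc⟩
      set h' := h ++ playPrefix π (m + 1) with hh'
      have hserved' : Iset T h' = ∅ :=
        Set.subset_empty_iff.mp (hserved ▸ Iset_append_subset T h _)
      have hmem : G.somePlay v' ∈ G.Pset γ h' v' := by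
        rw [IH γ (Order.lt_succ γ) h' hserved' v']
        exact ⟨G.somePlay_isPlay v', rfl⟩
      have hcost := hc _ hmem
      have hiserved : G.owner (π m) ∉ Iset T h' := by
        rw [hserved']
        exact Set.notMem_empty _
      rw [hT, hT,
          show prepend h π = prepend h' (shift π (m+1)) from
            (prepend_append_shift h π (m+1)).symm,
          reachCost_prepend_congr_of_served hiserved _ (shift π (m+1))] at hcost
      exact lt_irrefl _ hcost
    · rw [Pset_limit G α hlim]
      refine Set.eq_of_subset_of_subset ?_ ?_
      · intro ρ hρ
        simp only [Set.mem_iInter] at hρ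
        have h0 := hρ 0 hlim.pos
        rw [Pset_zero] at h0
        exact h0
      · intro ρ hρ
        simp only [Set.mem_iInter]
        intro β hβ
        rw [IH β hβ h hserved v]
        exact hρ

lemma playPrefix_congr {ρ ρ' : ℕ → V} {n : ℕ} (hag : ∀ k < n, ρ k = ρ' k) :
    playPrefix ρ n = playPrefix ρ' n :=
  congrArg List.ofFn (funext fun i => hag i i.2)

lemma prepend_congr_le {h : List V} {π π' : ℕ → V} {M : ℕ}
    (hag : ∀ k ≤ M, π' k = π k) {j : ℕ} (hj : j ≤ h.length + M) :
    prepend h π' j = prepend h π j := by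
  by_cases hjh : j < h.length
  · rw [prepend_lt _ _ _ hjh, prepend_lt _ _ _ hjh]
  · rw [prepend_ge _ _ _ hjh, prepend_ge _ _ _ hjh]
    exact hag _ (by omega)

section Topology

variable [Finite V]

local instance : TopologicalSpace V := ⊥

local instance : DiscreteTopology V := ⟨rfl⟩

lemma isOpen_coord (k : ℕ) (s : Set V) : IsOpen {ρ : ℕ → V | ρ k ∈ s} := by
  have he : {ρ : ℕ → V | ρ k ∈ s} = (fun ρ : ℕ → V => ρ k) ⁻¹' s := rfl
  rw [he]
  have hc : Continuous (fun ρ : ℕ → V => ρ k) := continuous_apply k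
  exact hc.isOpen_preimage s (isOpen_discrete s)

lemma isClosed_coord (k : ℕ) (s : Set V) : IsClosed {ρ : ℕ → V | ρ k ∈ s} :=
  IsClosed.preimage (continuous_apply k) (isClosed_discrete s)

lemma isClosed_pair (n m : ℕ) (F : V → V → Prop) :
    IsClosed {ρ : ℕ → V | F (ρ n) (ρ m)} := by
  have he : {ρ : ℕ → V | F (ρ n) (ρ m)}
      = (fun ρ : ℕ → V => (ρ n, ρ m)) ⁻¹' {p : V × V | F p.1 p.2} := rfl
  rw [he]
  exact IsClosed.preimage ((continuous_apply n).prodMk (continuous_apply m))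
    (isClosed_discrete {p : V × V | F p.1 p.2})

lemma isOpen_cylinder (π : ℕ → V) (M : ℕ) :
    IsOpen {ρ : ℕ → V | ∀ k ≤ M, ρ k = π k} := by
  have he : {ρ : ℕ → V | ∀ k ≤ M, ρ k = π k}
      = ⋂ k ∈ Finset.range (M + 1), {ρ : ℕ → V | ρ k ∈ ({π k} : Set V)} := by
    ext ρ
    simp [Nat.lt_succ_iff]
  rw [he]
  exact isOpen_biInter_finset fun k _ => isOpen_coord k _

lemma isClosed_playsFrom (v : V) :
    IsClosed {ρ : ℕ → V | G.IsPlay ρ ∧ ρ 0 = v} := by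
  have he : {ρ : ℕ → V | G.IsPlay ρ ∧ ρ 0 = v}
      = (⋂ n : ℕ, {ρ : ℕ → V | G.E (ρ n) (ρ (n + 1))}) ∩
        {ρ : ℕ → V | ρ 0 ∈ ({v} : Set V)} := by
    ext ρ
    simp [IsPlay]
  rw [he]
  exact (isClosed_iInter fun n => isClosed_pair n (n + 1) G.E).inter
    (isClosed_coord 0 _)

lemma continuous_prepend (L : List V) :
    Continuous (fun ρ : ℕ → V => prepend L ρ) := by
  refine continuous_pi fun k => ?_
  by_cases hk : k < L.length
  · simp only [prepend, dif_pos hk]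
    exact continuous_const
  · simp only [prepend, dif_neg hk]
    exact continuous_apply _

lemma exists_bound_of_closed (A : Set (ℕ → V)) (hA : IsClosed A) (W : Set V)
    (hall : ∀ ρ ∈ A, ∃ k, ρ k ∈ W) :
    ∃ m : ℕ, ∀ ρ ∈ A, ∃ k, k < m ∧ ρ k ∈ W := by
  have hcomp : IsCompact A := hA.isCompact
  have hopen : ∀ m : ℕ, IsOpen {ρ : ℕ → V | ∃ k, k < m ∧ ρ k ∈ W} := by
    intro m
    have he : {ρ : ℕ → V | ∃ k, k < m ∧ ρ k ∈ W}
        = ⋃ k ∈ Finset.range m, {ρ : ℕ → V | ρ k ∈ W} := by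
      ext ρ
      simp
    rw [he]
    exact isOpen_biUnion fun k _ => isOpen_coord k _
  have hcover : A ⊆ ⋃ m : ℕ, {ρ : ℕ → V | ∃ k, k < m ∧ ρ k ∈ W} := by
    intro ρ hρ
    obtain ⟨k, hk⟩ := hall ρ hρ
    exact Set.mem_iUnion.mpr ⟨k + 1, k, Nat.lt_succ_self k, hk⟩
  obtain ⟨t, ht⟩ := hcomp.elim_finite_subcover _ hopen hcover
  refine ⟨t.sup id + 1, fun ρ hρ => ?_⟩
  have := ht hρ
  simp only [Set.mem_iUnion] at this
  obtain ⟨m, hm, k, hk, hkW⟩ := this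
  exact ⟨k, lt_of_lt_of_le hk ((Finset.le_sup (f := id) hm).trans (Nat.le_succ _)), hkW⟩

lemma exists_max_reachCost (A : Set (ℕ → V)) (hA : IsClosed A)
    (hne : A.Nonempty) (W : Set V) :
    ∃ σ ∈ A, ∀ σ' ∈ A, reachCost W σ' ≤ reachCost W σ := by
  by_cases htop : ∃ σ ∈ A, reachCost W σ = ⊤
  · obtain ⟨σ, hσ, htop⟩ := htop
    exact ⟨σ, hσ, fun σ' _ => htop ▸ le_top⟩
  · push_neg at htop
    have hall : ∀ ρ ∈ A, ∃ k, ρ k ∈ W := fun ρ hρ =>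
      exists_hit_of_ne_top W ρ (htop ρ hρ)
    obtain ⟨m, hm⟩ := exists_bound_of_closed A hA W hall
    classical
    have hkey : ∀ ρ ∈ A, ∃ k : ℕ, k < m ∧ reachCost W ρ = (k : EReal) := by
      intro ρ hρ
      rcases reachCost_cases W ρ with h | ⟨k0, hk0⟩
      · exact absurd h (htop ρ hρ)
      · obtain ⟨k, hkm, hkW⟩ := hm ρ hρ
        have h1 := reachCost_le_of_mem W ρ hkW
        rw [hk0] at h1
        exact ⟨k0, lt_of_le_of_lt (EReal.natCast_le_iff.mp h1) hkm, hk0⟩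
    let F := (Finset.range m).filter (fun k : ℕ => ∃ σ ∈ A, reachCost W σ = (k : EReal))
    have hFne : F.Nonempty := by
      obtain ⟨σ0, hσ0⟩ := hne
      obtain ⟨k0, hk0m, hk0⟩ := hkey σ0 hσ0
      exact ⟨k0, Finset.mem_filter.mpr ⟨Finset.mem_range.mpr hk0m, σ0, hσ0, hk0⟩⟩
    have hmaxF := Finset.mem_filter.mp (F.max'_mem hFne)
    obtain ⟨σ, hσA, hσc⟩ := hmaxF.2
    refine ⟨σ, hσA, fun σ' hσ' => ?_⟩
    obtain ⟨k', hk'm, hk'⟩ := hkey σ' hσ'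
    have hk'F : k' ∈ F :=
      Finset.mem_filter.mpr ⟨Finset.mem_range.mpr hk'm, σ', hσ', hk'⟩
    rw [hk', hσc]
    exact EReal.natCast_le_iff.mpr (F.le_max' k' hk'F)

lemma Eset_isOpen (T : P → Set V) (hT : G.IsReachGame T) (α : Ordinal)
    (h : List V) (IH : ∀ (h' : List V) (v' : V), IsClosed (G.Pset α h' v')) :
    IsOpen (G.Eset (G.Pset α) h) := by
  rw [isOpen_iff_forall_mem_open]
  intro π hπ
  obtain ⟨n, v', hE, hne, hc⟩ := hπ
  set i := G.owner (π n) with hi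
  set L := h ++ playPrefix π (n + 1) with hL
  set S := G.Pset α L v' with hS
  rcases S.eq_empty_or_nonempty with hSe | hSne
  · refine ⟨{ρ : ℕ → V | ∀ k ≤ n + 1, ρ k = π k}, ?_, isOpen_cylinder π (n + 1),
      fun k _ => rfl⟩
    intro π' hag
    have hpre : playPrefix π' (n + 1) = playPrefix π (n + 1) :=
      playPrefix_congr fun k hk => hag k (by omega)
    refine ⟨n, v', by rw [hag n (by omega)]; exact hE,
      by rw [hag (n+1) le_rfl]; exact hne, ?_⟩
    intro ρ' hρ'
    rw [hpre] at hρ'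
    rw [← hL, ← hS] at hρ'
    rw [hSe] at hρ'
    exact absurd hρ' (Set.notMem_empty ρ')
  · -- the maximum of the prepended costs over the window
    have hAcl : IsClosed (prepend L '' S) :=
      (((IH L v').isCompact).image (continuous_prepend L)).isClosed
    obtain ⟨f, ⟨σ0, hσ0, rfl⟩, hmax⟩ :=
      exists_max_reachCost (prepend L '' S) hAcl (hSne.image _) (T i)
    set b := reachCost (T i) (prepend L σ0) with hb
    have hblt : b < reachCost (T i) (prepend h π) := by
      have := hc σ0 hσ0
      rwa [hT, hT] at this
    obtain ⟨m0, hm0⟩ : ∃ m0 : ℕ, b = (m0 : EReal) := by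
      rcases reachCost_cases (T i) (prepend L σ0) with htop' | hfin
      · rw [← hb] at htop'
        exact absurd (htop' ▸ hblt) (by simp)
      · rwa [← hb] at hfin
    refine ⟨{ρ : ℕ → V | ∀ k ≤ max (n + 1) m0, ρ k = π k}, ?_,
      isOpen_cylinder π _, fun k _ => rfl⟩
    intro π' hag
    have hpre : playPrefix π' (n + 1) = playPrefix π (n + 1) :=
      playPrefix_congr fun k hk => hag k (by omega)
    refine ⟨n, v', by rw [hag n (by omega)]; exact hE,
      by rw [hag (n+1) (by omega)]; exact hne, ?_⟩
    intro ρ' hρ'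
    rw [hpre] at hρ' ⊢
    rw [← hL, ← hS] at hρ'
    rw [← hL]
    have hρle : G.cost (G.owner (π' n)) (prepend L ρ') ≤ b := by
      rw [hag n (by omega), ← hi, hT]
      exact hmax _ ⟨ρ', hρ', rfl⟩
    have hπ'big : b < G.cost (G.owner (π' n)) (prepend h π') := by
      rw [hag n (by omega), ← hi, hT, hm0]
      refine lt_reachCost_of_not_mem _ _ m0 ?_
      intro j hj hmem
      have hagj : prepend h π' j = prepend h π j :=
        prepend_congr_le hag (by omega)
      rw [hagj] at hmem
      have hle := reachCost_le_of_mem (T i) (prepend h π) hmem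
      have : reachCost (T i) (prepend h π) ≤ b := by
        rw [hm0]
        exact hle.trans (EReal.natCast_le_iff.mpr hj)
      exact absurd hblt (not_lt.mpr this)
    exact lt_of_le_of_lt hρle hπ'big

lemma Pset_isClosed (T : P → Set V) (hT : G.IsReachGame T) :
    ∀ (α : Ordinal) (h : List V) (v : V), IsClosed (G.Pset α h v) := by
  intro α
  induction α using Ordinal.induction with
  | h α IH =>
    intro h v
    rcases Ordinal.zero_or_succ_or_isSuccLimit α with rfl | ⟨γ, rfl⟩ | hlim
    · rw [Pset_zero]
      exact isClosed_playsFrom G v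
    · rw [← Ordinal.add_one_eq_succ, Pset_succ, Set.diff_eq]
      exact (IH γ (Order.lt_succ γ) h v).inter
        (Eset_isOpen G T hT γ h (fun h' v' => IH γ (Order.lt_succ γ) h' v')).isClosed_compl
    · rw [Pset_limit G α hlim]
      exact isClosed_iInter fun β => isClosed_iInter fun hβ => IH β hβ h v

lemma lam_ne_of_ne (T : P → Set V) (hT : G.IsReachGame T) (α : Ordinal)
    (h : List V) (v : V) (hne : G.Pset α h v ≠ G.Pset (α + 1) h v) :
    ∃ (g : List V) (u u' : V), G.E u u' ∧
      LamVec G T α g u u' ≠ LamVec G T (α + 1) g u u' := by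
  by_contra hcon
  push_neg at hcon
  obtain ⟨ρ, hρP, hρE⟩ : ∃ ρ, ρ ∈ G.Pset α h v ∧ ρ ∈ G.Eset (G.Pset α) h := by
    by_contra hc
    push_neg at hc
    apply hne
    rw [Pset_succ]
    exact Set.Subset.antisymm
      (fun π hπ => (Set.mem_diff π).mpr ⟨hπ, hc π hπ⟩) Set.diff_subset
  obtain ⟨n, v', hE, hnev, hcond⟩ := hρE
  set i := G.owner (ρ n) with hi
  set g := h ++ playPrefix ρ n with hg
  set h' := h ++ playPrefix ρ (n + 1) with hh'
  have hgh' : g ++ [ρ n] = h' := by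
    rw [hg, hh', List.append_assoc, ← playPrefix_succ]
  have hplay := (G.isPlay_of_mem_Pset hρP).1
  have hEdge : G.E (ρ n) (ρ (n + 1)) := hplay n
  have hτ : shift ρ n ∈ G.Pset α g (ρ n) := G.Pset_shift α h v ρ n hρP
  have hτ1 : shift ρ n 1 = ρ (n + 1) := rfl
  have hΛ := hcon g (ρ n) (ρ (n + 1)) hEdge
  have hρnh' : ρ n ∈ h' := by
    rw [← hgh']
    exact List.mem_append_right g (List.mem_singleton.mpr rfl)
  -- Fact (b): plays through the same edge that are at least as costly for `i`
  -- as `ρ` are eliminated at stage `α + 1`.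
  have hElim : ∀ π, π ∈ G.Pset α g (ρ n) → π 1 = ρ (n + 1) →
      G.cost i (prepend h ρ) ≤ G.cost i (prepend g π) →
      π ∉ G.Pset (α + 1) g (ρ n) := by
    intro π hπ hπ1 hcost hmem
    rw [Pset_succ] at hmem
    have hπ0 : π 0 = ρ n := (G.isPlay_of_mem_Pset hπ).2
    have hlist : g ++ playPrefix π (0 + 1) = h' := by
      have h1 : playPrefix π (0 + 1) = [π 0] := by
        simp [playPrefix, List.ofFn_succ]
      rw [h1, hπ0, hgh']
    refine hmem.2 ⟨0, v', ?_, ?_, ?_⟩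
    · rw [hπ0]; exact hE
    · rw [hπ1]; exact hnev
    · intro ρ' hρ'
      rw [hlist] at hρ' ⊢
      rw [hπ0, ← hi]
      exact lt_of_lt_of_le (hcond ρ' hρ') hcost
  by_cases hiI : i ∈ Iset T h'
  · -- Case A: the owner has not reached his target along `h'`.
    have hiIg : i ∈ Iset T g := by
      rw [← hgh'] at hiI
      exact Iset_append_subset T g [ρ n] hiI
    have hcρ : G.cost i (prepend h ρ)
        = (g.length : EReal) + reachCost (T i) (shift ρ n) := by
      rw [hT, ← prepend_append_shift h ρ n, ← hg, reachCost_prepend _ _ _ hiIg]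
    have hsurv : ∀ π, π ∈ G.Pset (α + 1) g (ρ n) → π 1 = ρ (n + 1) →
        (g.length : EReal) + reachCost (T i) π
          < (g.length : EReal) + reachCost (T i) (shift ρ n) := by
      intro π hπ hπ1
      have hπα : π ∈ G.Pset α g (ρ n) :=
        G.Pset_antitone (α + 1) α le_self_add g (ρ n) hπ
      by_contra hge
      push_neg at hge
      refine hElim π hπα hπ1 ?_ hπ
      rw [hcρ, hT, reachCost_prepend _ _ _ hiIg]
      exact hge
    have hΛi := congrFun hΛ i
    simp only [LamVec, if_pos hiIg] at hΛi
    have hlowmem : G.cost i (shift ρ n)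
        ∈ G.cost i '' {π | π ∈ G.Pset α g (ρ n) ∧ π 1 = ρ (n + 1)} :=
      ⟨shift ρ n, ⟨hτ, hτ1⟩, rfl⟩
    rcases reachCost_cases (T i) (shift ρ n) with hc0top | ⟨m, hm⟩
    · -- Case A2 : the maximum at stage `α` is `⊤`; use compactness.
      have hDcl : IsClosed {π | π ∈ G.Pset (α + 1) g (ρ n) ∧ π 1 = ρ (n + 1)} := by
        have he : {π | π ∈ G.Pset (α + 1) g (ρ n) ∧ π 1 = ρ (n + 1)}
            = G.Pset (α + 1) g (ρ n) ∩ {π : ℕ → V | π 1 ∈ ({ρ (n + 1)} : Set V)} := by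
          ext π
          simp only [Set.mem_setOf_eq, Set.mem_inter_iff, Set.mem_singleton_iff]
        rw [he]
        exact (G.Pset_isClosed T hT (α + 1) g (ρ n)).inter (isClosed_coord 1 _)
      have hallhit : ∀ π ∈ {π | π ∈ G.Pset (α + 1) g (ρ n) ∧ π 1 = ρ (n + 1)},
          ∃ k, π k ∈ T i := by
        intro π hmemπ
        obtain ⟨hπ, hπ1⟩ := hmemπ
        have hlt := hsurv π hπ hπ1
        rw [hc0top, EReal.add_top_of_ne_bot (EReal.natCast_ne_bot _)] at hlt
        rcases reachCost_cases (T i) π with htp | ⟨k, hk⟩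
        · rw [htp, EReal.add_top_of_ne_bot (EReal.natCast_ne_bot _)] at hlt
          exact absurd hlt (lt_irrefl ⊤)
        · exact exists_hit_of_ne_top _ _ (by rw [hk]; exact EReal.natCast_ne_top k)
      obtain ⟨m, hmB⟩ := exists_bound_of_closed _ hDcl (T i) hallhit
      have hup : sSup (G.cost i '' {π | π ∈ G.Pset (α + 1) g (ρ n) ∧ π 1 = ρ (n + 1)})
          ≤ (m : EReal) := by
        refine sSup_le ?_
        rintro x ⟨π, hπ, rfl⟩
        obtain ⟨k, hkm, hkT⟩ := hmB π hπ
        rw [hT]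
        exact (reachCost_le_of_mem _ _ hkT).trans
          (EReal.natCast_le_iff.mpr (le_of_lt hkm))
      have hlow : (⊤ : EReal)
          ≤ sSup (G.cost i '' {π | π ∈ G.Pset α g (ρ n) ∧ π 1 = ρ (n + 1)}) := by
        refine le_sSup ?_
        have : G.cost i (shift ρ n) = ⊤ := by rw [hT]; exact hc0top
        exact this ▸ hlowmem
      rw [hΛi] at hlow
      exact EReal.natCast_ne_top m (top_le_iff.mp (hlow.trans hup))
    · -- Case A1 : the maximum at stage `α` is finite; it strictly decreases.
      have hm1 : 1 ≤ m := by
        have hnot : shift ρ n 0 ∉ T i := fun hmem => hiI (ρ n) hρnh' hmem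
        have h0 := lt_reachCost_of_not_mem (T i) (shift ρ n) 0
          (fun k hk => by rw [Nat.le_zero.mp hk]; exact hnot)
        rw [hm] at h0
        have := EReal.natCast_lt_iff.mp (by exact_mod_cast h0)
        omega
      have hup : sSup (G.cost i '' {π | π ∈ G.Pset (α + 1) g (ρ n) ∧ π 1 = ρ (n + 1)})
          ≤ ((m - 1 : ℕ) : EReal) := by
        refine sSup_le ?_
        rintro x ⟨π, ⟨hπ, hπ1⟩, rfl⟩
        have hlt := hsurv π hπ hπ1
        rw [hT]
        rcases reachCost_cases (T i) π with htp | ⟨k, hk⟩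
        · rw [htp, hm, EReal.add_top_of_ne_bot (EReal.natCast_ne_bot _)] at hlt
          exact absurd hlt (not_top_lt)
        · rw [hk, hm] at hlt
          have hcast : ((g.length + k : ℕ) : EReal) < ((g.length + m : ℕ) : EReal) := by
            push_cast
            exact hlt
          have hkm : k < m := by
            have := EReal.natCast_lt_iff.mp hcast
            omega
          rw [hk]
          exact EReal.natCast_le_iff.mpr (by omega)
      have hlow : (m : EReal)
          ≤ sSup (G.cost i '' {π | π ∈ G.Pset α g (ρ n) ∧ π 1 = ρ (n + 1)}) := by
        refine le_sSup ?_
        have : G.cost i (shift ρ n) = (m : EReal) := by rw [hT]; exact hm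
        exact this ▸ hlowmem
      rw [hΛi] at hlow
      have := EReal.natCast_le_iff.mp (hlow.trans hup)
      omega
  · -- Case B: the owner has already reached his target along `h'`.
    have hSempty : G.Pset α h' v' = ∅ := by
      rcases Set.eq_empty_or_nonempty (G.Pset α h' v') with he | ⟨σ, hσ⟩
      · exact he
      have hcσ := hcond σ hσ
      rw [hT, hT,
          show prepend h ρ = prepend h' (shift ρ (n + 1)) from
            (prepend_append_shift h ρ (n + 1)).symm,
          reachCost_prepend_congr_of_served hiI σ (shift ρ (n + 1))] at hcσ
      exact absurd hcσ (lt_irrefl _)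
    have hallgone : ∀ π, π ∈ G.Pset α g (ρ n) → π 1 = ρ (n + 1) →
        π ∉ G.Pset (α + 1) g (ρ n) := by
      intro π hπ hπ1 hmem
      rw [Pset_succ] at hmem
      have hπ0 : π 0 = ρ n := (G.isPlay_of_mem_Pset hπ).2
      have hlist : g ++ playPrefix π (0 + 1) = h' := by
        have h1 : playPrefix π (0 + 1) = [π 0] := by
          simp [playPrefix, List.ofFn_succ]
        rw [h1, hπ0, hgh']
      refine hmem.2 ⟨0, v', ?_, ?_, ?_⟩
      · rw [hπ0]; exact hE
      · rw [hπ1]; exact hnev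
      · intro ρ' hρ'
        rw [hlist, hSempty] at hρ'
        exact absurd hρ' (Set.notMem_empty ρ')
    rcases Set.eq_empty_or_nonempty (Iset T g) with hIg | ⟨j, hj⟩
    · -- impossible: everyone served along `g`, so nothing is eliminated there
      have hIh' : Iset T h' = ∅ := by
        rw [← hgh']
        exact Set.subset_empty_iff.mp (hIg ▸ Iset_append_subset T g [ρ n])
      have hall := G.Pset_allServed T hT α h' hIh' v'
      rw [hSempty] at hall
      have hsp : G.somePlay v' ∈ {σ : ℕ → V | G.IsPlay σ ∧ σ 0 = v'} :=
        ⟨G.somePlay_isPlay v', rfl⟩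
      rw [← hall] at hsp
      exact absurd hsp (Set.notMem_empty _)
    · have hΛj := congrFun hΛ j
      simp only [LamVec, if_pos hj] at hΛj
      have hDempty : {π | π ∈ G.Pset (α + 1) g (ρ n) ∧ π 1 = ρ (n + 1)} = ∅ := by
        refine Set.eq_empty_iff_forall_notMem.mpr ?_
        rintro π ⟨hπ, hπ1⟩
        exact hallgone π
          (G.Pset_antitone (α + 1) α le_self_add g (ρ n) hπ) hπ1 hπ
      rw [hDempty, Set.image_empty, sSup_empty] at hΛj
      have hlow : G.cost j (shift ρ n)
          ≤ sSup (G.cost j '' {π | π ∈ G.Pset α g (ρ n) ∧ π 1 = ρ (n + 1)}) :=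
        le_sSup ⟨shift ρ n, ⟨hτ, hτ1⟩, rfl⟩
      rw [hΛj] at hlow
      have h0 : (0 : EReal) ≤ G.cost j (shift ρ n) := by
        rw [hT]
        exact reachCost_nonneg _ _
      have := h0.trans hlow
      simp at this

end Topology

end QGame
open QGame in
/-- Strict decrease of the maximal-cost vectors when the
hierarchy strictly shrinks, in a quantitative reachability game: if
`P^I_α(v) = P^I_{α+1}(v)` then the maximal-cost vectors coincide at `α` and
`α+1` on every edge `(v,v')`; and if `P^I_α(v) ≠ P^I_{α+1}(v)` then some
player set `J` (the set of players not yet served along some history `g`)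
and some edge `(u,u')` witness `Λ̄(P^J_α(u),u') ≠ Λ̄(P^J_{α+1}(u),u')`. -/
theorem reach_LamVec_strict_decrease {P V : Type} [Finite P] [Finite V]
    (G : QGame P V) (T : P → Set V) (hT : G.IsReachGame T) (α : Ordinal) :
    (∀ (h : List V) (v : V), G.Pset α h v = G.Pset (α + 1) h v →
      ∀ v', G.E v v' → LamVec G T α h v v' = LamVec G T (α + 1) h v v') ∧
    (∀ (h : List V) (v : V), G.Pset α h v ≠ G.Pset (α + 1) h v →
      ∃ (g : List V) (u u' : V), G.E u u' ∧
        LamVec G T α g u u' ≠ LamVec G T (α + 1) g u u') := by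
  constructor
  · intro h v hset v' _
    funext i
    simp only [LamVec, hset]
  · intro h v hne
    exact G.lam_ne_of_ne T hT α h v hne
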